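/- Let J be an almost complex structure on a domain Ω ⊂ ℂⁿ with complex matrix A (defined by (J_st + J)^{-1}(J_st − J)v = A v̄), and let t = t(z) be a change of local coordinates. Then the complex matrix A' of J in the coordinates t satisfies the transformation rule A' = (t_z A + t_z̄)(t̄_z̄ + t̄_z A)^{-1}, whenever the inverse exists. -/
import Mathlib


open Complex Matrix

/-- The standard complex structure on `ℂⁿ`: multiplication by `i`, as an `ℝ`-linear map. -/
noncomputable def Jstd (n : ℕ) : Module.End ℝ (Fin n → ℂ) where
  toFun v := Complex.I • v
  map_add' x y := smul_add _ x y
  map_smul' c x := smul_comm Complex.I c x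

/-- Entrywise complex conjugate of a matrix. -/
def mconj {n : ℕ} (A : Matrix (Fin n) (Fin n) ℂ) : Matrix (Fin n) (Fin n) ℂ :=
  A.map (starRingEnd ℂ)

namespace Stmt8Aux
variable {n : ℕ}

noncomputable def pairMap (M N : Matrix (Fin n) (Fin n) ℂ) : Module.End ℝ (Fin n → ℂ) where
  toFun v := M.mulVec v + N.mulVec (star v)
  map_add' x y := by
    simp only [star_add, Matrix.mulVec_add]
    abel
  map_smul' c x := by
    simp only [star_smul, star_trivial, Matrix.mulVec_smul, RingHom.id_apply, smul_add]

lemma pairMap_apply (M N : Matrix (Fin n) (Fin n) ℂ) (v) :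
    pairMap M N v = M.mulVec v + N.mulVec (star v) := rfl

lemma star_mulVec' (M : Matrix (Fin n) (Fin n) ℂ) (v : Fin n → ℂ) :
    star (M.mulVec v) = (mconj M).mulVec (star v) := by
  funext i
  simp [Matrix.mulVec, dotProduct, mconj, star_sum, Matrix.map_apply]

lemma mconj_one : mconj (1 : Matrix (Fin n) (Fin n) ℂ) = 1 := by
  ext i j; simp [mconj, Matrix.one_apply, apply_ite]

lemma mconj_neg (M : Matrix (Fin n) (Fin n) ℂ) : mconj (-M) = -(mconj M) := by
  ext i j; simp [mconj]

lemma mconj_mconj (M : Matrix (Fin n) (Fin n) ℂ) : mconj (mconj M) = M := by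
  ext i j; simp [mconj]

lemma pairMap_mul (M₁ N₁ M₂ N₂ : Matrix (Fin n) (Fin n) ℂ) :
    pairMap M₁ N₁ * pairMap M₂ N₂
      = pairMap (M₁*M₂ + N₁*mconj N₂) (M₁*N₂ + N₁*mconj M₂) := by
  apply LinearMap.ext; intro v
  simp only [Module.End.mul_apply, pairMap_apply, star_add, Matrix.mulVec_add,
    star_mulVec', star_star, Matrix.mulVec_mulVec, Matrix.add_mulVec]
  abel

lemma pairMap_inj_snd {M N M' N' : Matrix (Fin n) (Fin n) ℂ}
    (h : pairMap M N = pairMap M' N') : N = N' := by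
  have h1 : ∀ v, M.mulVec v + N.mulVec (star v) = M'.mulVec v + N'.mulVec (star v) := by
    intro v
    simpa [pairMap_apply] using DFunLike.congr_fun h v
  have h2 : ∀ v : Fin n → ℂ, N.mulVec (star v) = N'.mulVec (star v) := by
    intro v
    have ha := h1 v
    have hb := h1 (Complex.I • v)
    simp only [star_smul, Complex.star_def, Complex.conj_I, neg_smul, Matrix.mulVec_neg,
      Matrix.mulVec_smul] at hb
    have hb' : M.mulVec v - N.mulVec (star v) = M'.mulVec v - N'.mulVec (star v) := by
      apply smul_right_injective (Fin n → ℂ) (Complex.I_ne_zero)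
      simpa [smul_sub, sub_eq_add_neg] using hb
    have h2s : (2:ℂ) • N.mulVec (star v) = (2:ℂ) • N'.mulVec (star v) := by
      rw [two_smul, two_smul]
      linear_combination ha - hb'
    exact smul_right_injective (Fin n → ℂ) two_ne_zero h2s
  ext i j
  have := h2 (star (Pi.single j (1:ℂ)))
  rw [star_star] at this
  simpa using congrFun this i

end Stmt8Aux

open Stmt8Aux

/-- Transformation rule for the complex matrix of an almost complex structure under a change
of coordinates with Wirtinger Jacobians `P = t_z`, `Q = t_z̄`:
`A' = (t_z A + t_z̄)(t̄_z̄ + t̄_z A)⁻¹ = (P A + Q)(P̄ + Q̄ A)⁻¹`. -/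
theorem stmt8 (n : ℕ) (J : Module.End ℝ (Fin n → ℂ)) (hJ : J * J = -1)
    (A A' : Matrix (Fin n) (Fin n) ℂ)
    (hu : IsUnit (Jstd n + J))
    (hA : ∀ v, ((hu.unit⁻¹ : Units (Module.End ℝ (Fin n → ℂ))) * (Jstd n - J)) v
      = A.mulVec (star v))
    -- the differential of the coordinate change `t`, with Wirtinger Jacobians `P, Q`
    (P Q : Matrix (Fin n) (Fin n) ℂ) (T : Module.End ℝ (Fin n → ℂ))
    (hT : ∀ v, T v = P.mulVec v + Q.mulVec (star v))
    (hTu : IsUnit T)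
    -- the direct image `J' = dt ∘ J ∘ dt⁻¹` of `J` under the coordinate change
    (J' : Module.End ℝ (Fin n → ℂ))
    (hJ' : J' = T * J * (hTu.unit⁻¹ : Units (Module.End ℝ (Fin n → ℂ))))
    (hu' : IsUnit (Jstd n + J'))
    (hA' : ∀ v, ((hu'.unit⁻¹ : Units (Module.End ℝ (Fin n → ℂ))) * (Jstd n - J')) v
      = A'.mulVec (star v))
    (hden : IsUnit (mconj P + mconj Q * A)) :
    A' = (P * A + Q) * (mconj P + mconj Q * A)⁻¹ := by
  have h0 : (↑hu.unit⁻¹ * (Jstd n - J) : Module.End ℝ (Fin n → ℂ)) = pairMap 0 A := by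
    apply LinearMap.ext; intro v
    simpa [pairMap_apply] using hA v
  have hL : (Jstd n + J) * pairMap 0 A = Jstd n - J := by
    have h1 : (↑hu.unit : Module.End ℝ (Fin n → ℂ)) * pairMap 0 A = Jstd n - J := by
      rw [← h0, ← mul_assoc, hu.unit.mul_inv, one_mul]
    rwa [hu.unit_spec] at h1
  have h0' : (↑hu'.unit⁻¹ * (Jstd n - J') : Module.End ℝ (Fin n → ℂ)) = pairMap 0 A' := by
    apply LinearMap.ext; intro v
    simpa [pairMap_apply] using hA' v
  have hL' : (Jstd n + J') * pairMap 0 A' = Jstd n - J' := by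
    have h1 : (↑hu'.unit : Module.End ℝ (Fin n → ℂ)) * pairMap 0 A' = Jstd n - J' := by
      rw [← h0', ← mul_assoc, hu'.unit.mul_inv, one_mul]
    rwa [hu'.unit_spec] at h1
  -- J' * T = T * J
  have hinvT : (↑hTu.unit⁻¹ : Module.End ℝ (Fin n → ℂ)) * T = 1 := by
    have h1 := hTu.unit.inv_mul
    rwa [hTu.unit_spec] at h1
  have hJT : J' * T = T * J := by
    rw [hJ', mul_assoc (T * J) _ T, hinvT, mul_one]
  set L : Module.End ℝ (Fin n → ℂ) := pairMap 0 A with hLdef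
  set L' : Module.End ℝ (Fin n → ℂ) := pairMap 0 A' with hL'def
  -- basic products
  have e1 : (Jstd n + J') * (1 - L') = J' + J' := by
    rw [mul_sub, mul_one, hL']; abel
  have e2 : (Jstd n + J') * (1 + L') = Jstd n + Jstd n := by
    rw [mul_add, mul_one, hL']; abel
  have e3 : (Jstd n + J) * (1 - L) = J + J := by
    rw [mul_sub, mul_one, hL]; abel
  have e4 : (Jstd n + J) * (1 + L) = Jstd n + Jstd n := by
    rw [mul_add, mul_one, hL]; abel
  -- T as a pairMap, and the twisted intertwining with Jstd
  have hTeq : T = pairMap P Q := by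
    apply LinearMap.ext; intro v
    simpa [pairMap_apply] using hT v
  have hJTt : Jstd n * pairMap P (-Q) = T * Jstd n := by
    rw [hTeq]
    apply LinearMap.ext; intro v
    show Complex.I • (pairMap P (-Q) v) = pairMap P Q (Complex.I • v)
    simp only [pairMap_apply, star_smul, Complex.star_def, Complex.conj_I, neg_smul,
      Matrix.mulVec_neg, Matrix.mulVec_smul, Matrix.neg_mulVec, smul_add, smul_neg]
  have hcomm : (1 - L) * (1 + L) = (1 + L) * (1 - L) := by
    simp only [sub_mul, mul_add, add_mul, mul_sub, one_mul, mul_one]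
    abel
  -- the key operator identity
  have key : (1 - L') * T * (1 + L) = (1 + L') * pairMap P (-Q) * (1 - L) := by
    apply hu'.mul_left_cancel
    calc (Jstd n + J') * ((1 - L') * T * (1 + L))
        = (((Jstd n + J') * (1 - L')) * T) * (1 + L) := by
          rw [← mul_assoc (Jstd n + J') ((1 - L') * T) (1 + L),
            ← mul_assoc (Jstd n + J') (1 - L') T]
      _ = ((J' + J') * T) * (1 + L) := by rw [e1]
      _ = (T * (J + J)) * (1 + L) := by
          rw [add_mul, hJT, ← mul_add]
      _ = T * (((Jstd n + J) * (1 - L)) * (1 + L)) := by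
          rw [← e3, mul_assoc T _ (1 + L)]
      _ = T * (((Jstd n + J) * (1 + L)) * (1 - L)) := by
          rw [mul_assoc (Jstd n + J) (1 - L) (1 + L), hcomm,
            ← mul_assoc (Jstd n + J) (1 + L) (1 - L)]
      _ = T * ((Jstd n + Jstd n) * (1 - L)) := by rw [e4]
      _ = (T * Jstd n + T * Jstd n) * (1 - L) := by
          rw [← mul_assoc T _ (1 - L), mul_add]
      _ = ((Jstd n) * pairMap P (-Q) + (Jstd n) * pairMap P (-Q)) * (1 - L) := by
          rw [hJTt]
      _ = (Jstd n + J') * ((1 + L') * pairMap P (-Q) * (1 - L)) := by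
          rw [← add_mul, ← e2, mul_assoc ((Jstd n + J') * (1 + L')) _ (1 - L),
            mul_assoc (Jstd n + J') (1 + L') (pairMap P (-Q) * (1 - L)),
            ← mul_assoc (1 + L') (pairMap P (-Q)) (1 - L)]
  -- rewrite everything as pairMaps
  have p1 : (1 : Module.End ℝ (Fin n → ℂ)) - L' = pairMap 1 (-A') := by
    rw [hL'def]
    apply LinearMap.ext; intro v
    simp [pairMap_apply, Matrix.neg_mulVec, sub_eq_add_neg]
  have p2 : (1 : Module.End ℝ (Fin n → ℂ)) + L = pairMap 1 A := by
    rw [hLdef]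
    apply LinearMap.ext; intro v
    simp [pairMap_apply]
  have p3 : (1 : Module.End ℝ (Fin n → ℂ)) + L' = pairMap 1 A' := by
    rw [hL'def]
    apply LinearMap.ext; intro v
    simp [pairMap_apply]
  have p4 : (1 : Module.End ℝ (Fin n → ℂ)) - L = pairMap 1 (-A) := by
    rw [hLdef]
    apply LinearMap.ext; intro v
    simp [pairMap_apply, Matrix.neg_mulVec, sub_eq_add_neg]
  rw [p1, p2, p3, p4, hTeq, pairMap_mul, pairMap_mul, pairMap_mul, pairMap_mul] at key
  have keyN := pairMap_inj_snd key
  simp only [mconj_one, mconj_neg, one_mul, mul_one, neg_mul, mul_neg, neg_neg] at keyN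
  have hx : ((P * A + Q) - A' * (mconj P + mconj Q * A))
      + ((P * A + Q) - A' * (mconj P + mconj Q * A)) = 0 := by
    calc ((P * A + Q) - A' * (mconj P + mconj Q * A))
          + ((P * A + Q) - A' * (mconj P + mconj Q * A))
        = ((P + -(A' * mconj Q)) * A + (Q + -(A' * mconj P)))
          - (-((P + -(A' * mconj Q)) * A) + (-Q + A' * mconj P)) := by noncomm_ring
      _ = 0 := by rw [keyN, sub_self]
  have hx2 : (2:ℂ) • ((P * A + Q) - A' * (mconj P + mconj Q * A)) = 0 := by
    rw [two_smul]; exact hx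
  have hx3 : (P * A + Q) - A' * (mconj P + mconj Q * A) = 0 :=
    (smul_eq_zero.mp hx2).resolve_left two_ne_zero
  have hAD : A' * (mconj P + mconj Q * A) = P * A + Q := (sub_eq_zero.mp hx3).symm
  rw [← hAD, mul_assoc, Matrix.mul_nonsing_inv _ ((Matrix.isUnit_iff_isUnit_det _).mp hden),
    mul_one]
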